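/- Let H ∈ (0, 1/2) and α ∈ (0,1]. Then there exists a finite constant c (depending only on H and α) such that for all K ≥ 1: ∫₀^∞ e^{−2x} (∫₀^x u^{H−3/2} (e^u − 1) du) (∫_{x+K}^∞ v^{H−3/2} (e^v − 1) (v−x)^{−α−1} e^{−(v−x)} dv) dx ≤ c · K^{−α + H − 3/2}. -/

import Mathlib

open Real MeasureTheory intervalIntegral

section Aux

variable {H : ℝ}

private lemma aux_exp_sub_one_le (u : ℝ) : Real.exp u - 1 ≤ u * Real.exp u := by
  have h := Real.add_one_le_exp (-u)
  rw [Real.exp_neg] at h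
  have hp := Real.exp_pos u
  have := mul_le_mul_of_nonneg_right h hp.le
  rw [inv_mul_cancel₀ hp.ne'] at this
  nlinarith

private lemma aux_phi_nonneg {u : ℝ} (hu : 0 ≤ u) :
    0 ≤ u ^ (H - 3 / 2) * (Real.exp u - 1) :=
  mul_nonneg (Real.rpow_nonneg hu _) (by linarith [Real.one_le_exp hu])

private lemma aux_phi_le (hH1 : H < 1 / 2) {x u : ℝ} (hu : 0 ≤ u) (hux : u ≤ x) :
    u ^ (H - 3 / 2) * (Real.exp u - 1) ≤ Real.exp x * u ^ (H - 1 / 2) := by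
  rcases eq_or_lt_of_le hu with h | h
  · rw [← h, Real.zero_rpow (by intro hc; rw [sub_eq_zero] at hc; norm_num [hc] at hH1 : H - 3 / 2 ≠ 0),
      Real.zero_rpow (by intro hc; rw [sub_eq_zero] at hc; norm_num [hc] at hH1 : H - 1 / 2 ≠ 0)]
    simp
  · have h1 : Real.exp u - 1 ≤ u * Real.exp x := by
      have := aux_exp_sub_one_le u
      have h2 : u * Real.exp u ≤ u * Real.exp x :=
        mul_le_mul_of_nonneg_left (Real.exp_le_exp.2 hux) hu
      linarith
    calc u ^ (H - 3/2) * (Real.exp u - 1) ≤ u ^ (H - 3/2) * (u * Real.exp x) :=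
          mul_le_mul_of_nonneg_left h1 (Real.rpow_nonneg hu _)
      _ = Real.exp x * (u ^ (H - 3/2) * u) := by ring
      _ = Real.exp x * u ^ (H - 1/2) := by
          rw [← Real.rpow_add_one h.ne' (H - 3/2), show H - 3/2 + 1 = H - 1/2 by ring]

private lemma aux_phi_integrableOn (hH0 : 0 < H) (hH1 : H < 1 / 2) {x : ℝ} (hx : 0 ≤ x) :
    IntegrableOn (fun u : ℝ => u ^ (H - 3 / 2) * (Real.exp u - 1)) (Set.Ioc 0 x) := by
  have hmaj : IntegrableOn (fun u : ℝ => Real.exp x * u ^ (H - 1 / 2)) (Set.Ioc 0 x) := by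
    exact ((intervalIntegrable_rpow' (by linarith)).1).const_mul _
  refine hmaj.mono' ?_ ?_
  · exact Measurable.aestronglyMeasurable (by fun_prop)
  · filter_upwards [ae_restrict_mem measurableSet_Ioc] with u hu
    rw [Real.norm_eq_abs, abs_of_nonneg (aux_phi_nonneg hu.1.le)]
    exact aux_phi_le hH1 hu.1.le hu.2

private lemma aux_F_le (hH0 : 0 < H) (hH1 : H < 1 / 2) {x : ℝ} (hx : 0 < x) :
    (∫ u in (0:ℝ)..x, u ^ (H - 3 / 2) * (Real.exp u - 1)) ≤
    Real.exp x * (Real.exp (-(x / 2)) * (x / 2) ^ (H + 1 / 2) / (H + 1 / 2) +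
      (x / 2) ^ (H - 3 / 2) * min 1 (x / 2)) := by
  have h2 : 0 < x / 2 := by linarith
  have hIoc := aux_phi_integrableOn hH0 hH1 hx.le
  have hi1 : IntervalIntegrable (fun u : ℝ => u ^ (H - 3 / 2) * (Real.exp u - 1)) volume 0 (x/2) :=
    (intervalIntegrable_iff_integrableOn_Ioc_of_le h2.le).2
      (hIoc.mono_set (Set.Ioc_subset_Ioc le_rfl (by linarith)))
  have hi2 : IntervalIntegrable (fun u : ℝ => u ^ (H - 3 / 2) * (Real.exp u - 1)) volume (x/2) x :=
    (intervalIntegrable_iff_integrableOn_Ioc_of_le (by linarith)).2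
      (hIoc.mono_set (Set.Ioc_subset_Ioc h2.le le_rfl))
  have hsplit : (∫ u in (0:ℝ)..x, u ^ (H - 3 / 2) * (Real.exp u - 1)) =
      (∫ u in (0:ℝ)..(x/2), u ^ (H - 3 / 2) * (Real.exp u - 1)) +
      (∫ u in (x/2)..x, u ^ (H - 3 / 2) * (Real.exp u - 1)) :=
    (integral_add_adjacent_intervals hi1 hi2).symm
  -- first piece
  have hb1 : (∫ u in (0:ℝ)..(x/2), u ^ (H - 3 / 2) * (Real.exp u - 1)) ≤
      Real.exp (x/2) * ((x/2) ^ (H + 1/2) / (H + 1/2)) := by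
    have hmono : (∫ u in (0:ℝ)..(x/2), u ^ (H - 3 / 2) * (Real.exp u - 1)) ≤
        (∫ u in (0:ℝ)..(x/2), Real.exp (x/2) * u ^ (H - 1 / 2)) := by
      refine integral_mono_on h2.le hi1 ((intervalIntegrable_rpow' (by linarith)).const_mul _)
        fun u hu => aux_phi_le hH1 hu.1 hu.2
    have hcomp : (∫ u in (0:ℝ)..(x/2), Real.exp (x/2) * u ^ (H - 1 / 2)) =
        Real.exp (x/2) * ((x/2) ^ (H + 1/2) / (H + 1/2)) := by
      rw [intervalIntegral.integral_const_mul, integral_rpow (Or.inl (by linarith))]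
      rw [Real.zero_rpow (by intro hc; norm_num at hc; linarith), show H - 1/2 + 1 = H + 1/2 by ring]
      ring
    linarith
  -- second piece
  have hb2 : (∫ u in (x/2)..x, u ^ (H - 3 / 2) * (Real.exp u - 1)) ≤
      (x/2) ^ (H - 3/2) * (Real.exp x - Real.exp (x/2)) := by
    have hmono : (∫ u in (x/2)..x, u ^ (H - 3 / 2) * (Real.exp u - 1)) ≤
        (∫ u in (x/2)..x, (x/2) ^ (H - 3/2) * Real.exp u) := by
      refine integral_mono_on (by linarith) hi2
        ((intervalIntegrable_const.mul_continuousOn ?_)) fun u hu => ?_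
      · exact Continuous.continuousOn Real.continuous_exp
      · have hu1 : u ^ (H - 3/2) ≤ (x/2) ^ (H - 3/2) :=
          Real.rpow_le_rpow_of_nonpos h2 hu.1 (by linarith)
        have := Real.exp_pos u
        have hge : (0:ℝ) ≤ u ^ (H - 3/2) := Real.rpow_nonneg (by linarith [hu.1]) _
        nlinarith [Real.one_le_exp (show (0:ℝ) ≤ u by linarith [hu.1])]
    have hcomp : (∫ u in (x/2)..x, (x/2) ^ (H - 3/2) * Real.exp u) =
        (x/2) ^ (H - 3/2) * (Real.exp x - Real.exp (x/2)) := by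
      rw [intervalIntegral.integral_const_mul, integral_exp]
    linarith
  -- combine
  have hea : Real.exp x * Real.exp (-(x/2)) = Real.exp (x/2) := by
    rw [← Real.exp_add]; ring_nf
  have h3 : Real.exp (x/2) * Real.exp (x/2) = Real.exp x := by
    rw [← Real.exp_add]; ring_nf
  have hmin : Real.exp x - Real.exp (x/2) ≤ Real.exp x * min 1 (x/2) := by
    rcases le_total 1 (x/2) with h | h
    · rw [min_eq_left h]; nlinarith [Real.exp_pos (x/2)]
    · rw [min_eq_right h]
      have h5 := aux_exp_sub_one_le (x/2)
      nlinarith [Real.exp_pos (x/2)]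
  have hP : (0:ℝ) ≤ (x/2) ^ (H - 3/2) := Real.rpow_nonneg h2.le _
  have h4 := mul_le_mul_of_nonneg_left hmin hP
  rw [hsplit]
  have hre : Real.exp x * (Real.exp (-(x / 2)) * (x / 2) ^ (H + 1 / 2) / (H + 1 / 2) +
      (x / 2) ^ (H - 3 / 2) * min 1 (x / 2))
      = Real.exp (x/2) * ((x/2) ^ (H + 1/2) / (H + 1/2)) +
        (x/2) ^ (H - 3/2) * (Real.exp x * min 1 (x/2)) := by
    rw [← hea]; ring
  rw [hre]
  linarith

private lemma aux_maj_integrable (hH0 : 0 < H) (hH1 : H < 1 / 2) :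
    IntegrableOn (fun x : ℝ => Real.exp (-(x / 2)) * (x / 2) ^ (H + 1 / 2) / (H + 1 / 2) +
      (x / 2) ^ (H - 3 / 2) * min 1 (x / 2)) (Set.Ioi 0) := by
  apply Integrable.add
  · have h := integrableOn_rpow_mul_exp_neg_mul_rpow (s := H + 1/2) (p := 1) (b := 1/2)
      (by linarith) one_pos (by norm_num)
    have h2pos : (0:ℝ) < (2:ℝ) ^ (H + 1/2) := Real.rpow_pos_of_pos (by norm_num) _
    have hHpos : (0:ℝ) < H + 1/2 := by linarith
    have h' : IntegrableOn
        (fun x : ℝ => (((2:ℝ) ^ (H + 1/2) * (H + 1/2))⁻¹) * (x ^ (H + 1/2) * Real.exp (-(1/2) * x ^ (1:ℝ))))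
        (Set.Ioi 0) := h.const_mul _
    refine IntegrableOn.congr_fun h' (fun x hx => ?_) measurableSet_Ioi
    have hx0 : (0:ℝ) < x := hx
    rw [Real.rpow_one, Real.div_rpow hx0.le (by norm_num : (0:ℝ) ≤ 2),
      show -(1/2) * x = -(x/2) by ring]
    field_simp
  · have hsplit : Set.Ioc (0:ℝ) 2 ∪ Set.Ioi 2 = Set.Ioi 0 :=
      Set.Ioc_union_Ioi_eq_Ioi (by norm_num)
    rw [← hsplit]
    apply IntegrableOn.union
    · have hmaj : IntegrableOn (fun x : ℝ => ((2:ℝ) ^ (H - 1/2))⁻¹ * x ^ (H - 1/2))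
          (Set.Ioc 0 2) :=
        ((intervalIntegrable_rpow' (by linarith)).1).const_mul _
      refine hmaj.mono' (Measurable.aestronglyMeasurable (by fun_prop)) ?_
      filter_upwards [ae_restrict_mem measurableSet_Ioc] with x hx
      have hx2 : 0 < x / 2 := by linarith [hx.1]
      have hmn : 0 ≤ min 1 (x / 2) := le_min zero_le_one hx2.le
      rw [Real.norm_eq_abs, abs_of_nonneg (mul_nonneg (Real.rpow_nonneg hx2.le _) hmn)]
      calc (x/2) ^ (H - 3/2) * min 1 (x/2) ≤ (x/2) ^ (H - 3/2) * (x/2) :=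
            mul_le_mul_of_nonneg_left (min_le_right _ _) (Real.rpow_nonneg hx2.le _)
        _ = (x/2) ^ (H - 1/2) := by
            rw [← Real.rpow_add_one hx2.ne' (H - 3/2), show H - 3/2 + 1 = H - 1/2 by ring]
        _ = ((2:ℝ) ^ (H - 1/2))⁻¹ * x ^ (H - 1/2) := by
            rw [Real.div_rpow (by linarith [hx.1] : (0:ℝ) ≤ x) (by norm_num : (0:ℝ) ≤ 2)]
            ring
    · have hmaj : IntegrableOn (fun x : ℝ => ((2:ℝ) ^ (H - 3/2))⁻¹ * x ^ (H - 3/2))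
          (Set.Ioi 2) :=
        (integrableOn_Ioi_rpow_of_lt (by linarith) (by norm_num : (0:ℝ) < 2)).const_mul _
      refine hmaj.mono' (Measurable.aestronglyMeasurable (by fun_prop)) ?_
      filter_upwards [ae_restrict_mem measurableSet_Ioi] with x hx
      have hx0 : (0:ℝ) < x := by have := Set.mem_Ioi.1 hx; linarith
      have hx2 : 0 < x / 2 := by linarith
      rw [Real.norm_eq_abs,
        abs_of_nonneg (mul_nonneg (Real.rpow_nonneg hx2.le _) (le_min zero_le_one hx2.le))]
      calc (x/2) ^ (H - 3/2) * min 1 (x/2) ≤ (x/2) ^ (H - 3/2) * 1 :=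
            mul_le_mul_of_nonneg_left (min_le_left _ _) (Real.rpow_nonneg hx2.le _)
        _ = ((2:ℝ) ^ (H - 3/2))⁻¹ * x ^ (H - 3/2) := by
            rw [mul_one, Real.div_rpow hx0.le (by norm_num : (0:ℝ) ≤ 2)]
            ring

private lemma aux_mono (hH0 : 0 < H) (hH1 : H < 1 / 2) :
    Monotone (fun x : ℝ => ∫ u in Set.Ioc 0 x, u ^ (H - 3 / 2) * (Real.exp u - 1)) := by
  intro a b hab
  rcases le_or_gt b 0 with hb | hb
  · have ha : Set.Ioc (0:ℝ) a = ∅ := Set.Ioc_eq_empty (by intro h; linarith)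
    have hbb : Set.Ioc (0:ℝ) b = ∅ := Set.Ioc_eq_empty (by intro h; linarith)
    simp only [ha, hbb, le_refl]
  · refine setIntegral_mono_set (aux_phi_integrableOn hH0 hH1 hb.le) ?_ ?_
    · filter_upwards [ae_restrict_mem measurableSet_Ioc] with u hu using aux_phi_nonneg hu.1.le
    · exact HasSubset.Subset.eventuallyLE (Set.Ioc_subset_Ioc le_rfl hab)

/-- estimate of the term `J_{4,3,3}`. -/
theorem stmt_15 (H α : ℝ) (hH0 : 0 < H) (hH1 : H < 1 / 2) (hα0 : 0 < α) (hα1 : α ≤ 1) :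
    ∃ c : ℝ, ∀ K : ℝ, 1 ≤ K →
      (∫ x in Set.Ioi (0 : ℝ), Real.exp (-2 * x) *
          (∫ u in (0:ℝ)..x, u ^ (H - 3 / 2) * (Real.exp u - 1)) *
          (∫ v in Set.Ioi (x + K),
            v ^ (H - 3 / 2) * (Real.exp v - 1) * (v - x) ^ (-α - 1) * Real.exp (-(v - x)))) ≤
        c * K ^ (-α + H - 3 / 2) := by
  have hden : (0:ℝ) < 1/2 - H := by linarith
  refine ⟨(1/2 - H)⁻¹ * ∫ x in Set.Ioi (0:ℝ),
      Real.exp (-x) * ∫ u in (0:ℝ)..x, u ^ (H - 3 / 2) * (Real.exp u - 1), ?_⟩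
  intro K hK
  have hK0 : (0:ℝ) < K := by linarith
  -- measurability of g
  have hgm : AEStronglyMeasurable
      (fun x : ℝ => Real.exp (-x) * ∫ u in (0:ℝ)..x, u ^ (H - 3 / 2) * (Real.exp u - 1))
      (volume.restrict (Set.Ioi 0)) := by
    have hmeas : Measurable (fun x : ℝ => ∫ u in Set.Ioc 0 x, u ^ (H - 3 / 2) * (Real.exp u - 1)) :=
      (aux_mono hH0 hH1).measurable
    have h1 : AEStronglyMeasurable
        (fun x : ℝ => Real.exp (-x) * ∫ u in Set.Ioc 0 x, u ^ (H - 3 / 2) * (Real.exp u - 1))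
        (volume.restrict (Set.Ioi 0)) :=
      ((Real.measurable_exp.comp measurable_neg).mul hmeas).aestronglyMeasurable
    refine h1.congr ?_
    filter_upwards [ae_restrict_mem measurableSet_Ioi] with x hx
    rw [intervalIntegral.integral_of_le (le_of_lt hx)]
  -- integrability of g
  have hgi : IntegrableOn
      (fun x : ℝ => Real.exp (-x) * ∫ u in (0:ℝ)..x, u ^ (H - 3 / 2) * (Real.exp u - 1))
      (Set.Ioi 0) := by
    refine (aux_maj_integrable hH0 hH1).mono' hgm ?_
    filter_upwards [ae_restrict_mem measurableSet_Ioi] with x hx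
    have hx0 : (0:ℝ) < x := hx
    have hF0 : 0 ≤ ∫ u in (0:ℝ)..x, u ^ (H - 3 / 2) * (Real.exp u - 1) :=
      intervalIntegral.integral_nonneg hx0.le fun u hu => aux_phi_nonneg hu.1
    rw [Real.norm_eq_abs, abs_of_nonneg (mul_nonneg (Real.exp_nonneg _) hF0)]
    have hle := aux_F_le hH0 hH1 hx0
    have hexp : Real.exp (-x) * Real.exp x = 1 := by rw [← Real.exp_add]; simp
    calc Real.exp (-x) * ∫ u in (0:ℝ)..x, u ^ (H - 3 / 2) * (Real.exp u - 1)
        ≤ Real.exp (-x) * (Real.exp x * (Real.exp (-(x / 2)) * (x / 2) ^ (H + 1 / 2) / (H + 1 / 2) +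
            (x / 2) ^ (H - 3 / 2) * min 1 (x / 2))) :=
          mul_le_mul_of_nonneg_left hle (Real.exp_nonneg _)
      _ = Real.exp (-(x / 2)) * (x / 2) ^ (H + 1 / 2) / (H + 1 / 2) +
            (x / 2) ^ (H - 3 / 2) * min 1 (x / 2) := by
          rw [← mul_assoc, hexp, one_mul]
  -- key inner bound
  have key : ∀ x ∈ Set.Ioi (0:ℝ),
      (∫ v in Set.Ioi (x + K),
          v ^ (H - 3 / 2) * (Real.exp v - 1) * (v - x) ^ (-α - 1) * Real.exp (-(v - x)))
        ≤ Real.exp x * (K ^ (-α + H - 3 / 2) / (1/2 - H)) := by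
    intro x hx
    have hx0 : (0:ℝ) < x := hx
    have hxK : (0:ℝ) < x + K := by linarith
    have hmono : (∫ v in Set.Ioi (x + K),
          v ^ (H - 3 / 2) * (Real.exp v - 1) * (v - x) ^ (-α - 1) * Real.exp (-(v - x)))
        ≤ ∫ v in Set.Ioi (x + K), (Real.exp x * K ^ (-α - 1)) * v ^ (H - 3 / 2) := by
      refine integral_mono_of_nonneg ?_
        ((integrableOn_Ioi_rpow_of_lt (by linarith) hxK).const_mul _) ?_
      · filter_upwards [ae_restrict_mem measurableSet_Ioi] with v hv
        have hv0 : (0:ℝ) < v := by have := Set.mem_Ioi.1 hv; linarith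
        have hvx : (0:ℝ) ≤ v - x := by have := Set.mem_Ioi.1 hv; linarith
        exact mul_nonneg (mul_nonneg (mul_nonneg (Real.rpow_nonneg hv0.le _)
          (by linarith [Real.one_le_exp hv0.le])) (Real.rpow_nonneg hvx _))
          (Real.exp_nonneg _)
      · filter_upwards [ae_restrict_mem measurableSet_Ioi] with v hv
        have hvm := Set.mem_Ioi.1 hv
        have hv0 : (0:ℝ) < v := by linarith
        have hvx : K ≤ v - x := by linarith
        have hA : (0:ℝ) ≤ v ^ (H - 3 / 2) := Real.rpow_nonneg hv0.le _
        have hC : (0:ℝ) ≤ (v - x) ^ (-α - 1) := Real.rpow_nonneg (by linarith) _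
        have e1 : (Real.exp v - 1) * Real.exp (-(v - x)) ≤ Real.exp x := by
          have h3 : Real.exp v * Real.exp (-(v - x)) = Real.exp x := by
            rw [← Real.exp_add]; ring_nf
          nlinarith [Real.exp_pos (-(v - x))]
        have e2 : (v - x) ^ (-α - 1) ≤ K ^ (-α - 1) :=
          Real.rpow_le_rpow_of_nonpos hK0 hvx (by linarith)
        have e1nn : (0:ℝ) ≤ (Real.exp v - 1) * Real.exp (-(v - x)) :=
          mul_nonneg (by linarith [Real.one_le_exp hv0.le]) (Real.exp_nonneg _)
        calc v ^ (H - 3 / 2) * (Real.exp v - 1) * (v - x) ^ (-α - 1) * Real.exp (-(v - x))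
            = (v ^ (H - 3 / 2) * ((Real.exp v - 1) * Real.exp (-(v - x)))) * (v - x) ^ (-α - 1) := by
              ring
          _ ≤ (v ^ (H - 3 / 2) * Real.exp x) * K ^ (-α - 1) := by
              refine mul_le_mul (mul_le_mul_of_nonneg_left e1 hA) e2 hC ?_
              exact mul_nonneg hA (Real.exp_nonneg _)
          _ = (Real.exp x * K ^ (-α - 1)) * v ^ (H - 3 / 2) := by ring
    have hval : (∫ v in Set.Ioi (x + K), (Real.exp x * K ^ (-α - 1)) * v ^ (H - 3 / 2))
        = (Real.exp x * K ^ (-α - 1)) * (-(x + K) ^ (H - 1 / 2) / (H - 1 / 2)) := by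
      rw [MeasureTheory.integral_const_mul, integral_Ioi_rpow_of_lt (by linarith) hxK,
        show H - 3 / 2 + 1 = H - 1 / 2 by ring]
    have hbd : -(x + K) ^ (H - 1 / 2) / (H - 1 / 2) ≤ K ^ (H - 1 / 2) / (1/2 - H) := by
      have e3 : -(x + K) ^ (H - 1 / 2) / (H - 1 / 2) = (x + K) ^ (H - 1 / 2) / (1/2 - H) := by
        rw [div_eq_div_iff (by linarith) (by linarith)]; ring
      rw [e3]
      have h9 : (x + K) ^ (H - 1 / 2) ≤ K ^ (H - 1 / 2) :=
        Real.rpow_le_rpow_of_nonpos hK0 (by linarith) (by linarith)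
      exact (div_le_div_iff_of_pos_right hden).2 h9
    calc (∫ v in Set.Ioi (x + K),
          v ^ (H - 3 / 2) * (Real.exp v - 1) * (v - x) ^ (-α - 1) * Real.exp (-(v - x)))
        ≤ ∫ v in Set.Ioi (x + K), (Real.exp x * K ^ (-α - 1)) * v ^ (H - 3 / 2) := hmono
      _ = (Real.exp x * K ^ (-α - 1)) * (-(x + K) ^ (H - 1 / 2) / (H - 1 / 2)) := hval
      _ ≤ (Real.exp x * K ^ (-α - 1)) * (K ^ (H - 1 / 2) / (1/2 - H)) :=
          mul_le_mul_of_nonneg_left hbd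
            (mul_nonneg (Real.exp_nonneg _) (Real.rpow_nonneg hK0.le _))
      _ = Real.exp x * (K ^ (-α + H - 3 / 2) / (1/2 - H)) := by
          rw [show (-α + H - 3 / 2 : ℝ) = (-α - 1) + (H - 1 / 2) by ring, Real.rpow_add hK0]
          ring
  -- conclusion
  calc (∫ x in Set.Ioi (0 : ℝ), Real.exp (-2 * x) *
          (∫ u in (0:ℝ)..x, u ^ (H - 3 / 2) * (Real.exp u - 1)) *
          (∫ v in Set.Ioi (x + K),
            v ^ (H - 3 / 2) * (Real.exp v - 1) * (v - x) ^ (-α - 1) * Real.exp (-(v - x))))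
      ≤ ∫ x in Set.Ioi (0:ℝ), (K ^ (-α + H - 3 / 2) * (1/2 - H)⁻¹) *
          (Real.exp (-x) * ∫ u in (0:ℝ)..x, u ^ (H - 3 / 2) * (Real.exp u - 1)) := by
        refine integral_mono_of_nonneg ?_ (hgi.const_mul _) ?_
        · filter_upwards [ae_restrict_mem measurableSet_Ioi] with x hx
          have hx0 : (0:ℝ) < x := hx
          have hF0 : 0 ≤ ∫ u in (0:ℝ)..x, u ^ (H - 3 / 2) * (Real.exp u - 1) :=
            intervalIntegral.integral_nonneg hx0.le fun u hu => aux_phi_nonneg hu.1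
          have hI0 : 0 ≤ ∫ v in Set.Ioi (x + K),
              v ^ (H - 3 / 2) * (Real.exp v - 1) * (v - x) ^ (-α - 1) * Real.exp (-(v - x)) := by
            refine setIntegral_nonneg measurableSet_Ioi fun v hv => ?_
            have hv0 : (0:ℝ) < v := by have := Set.mem_Ioi.1 hv; linarith
            have hvx : (0:ℝ) ≤ v - x := by have := Set.mem_Ioi.1 hv; linarith
            exact mul_nonneg (mul_nonneg (mul_nonneg (Real.rpow_nonneg hv0.le _)
              (by linarith [Real.one_le_exp hv0.le])) (Real.rpow_nonneg hvx _))
              (Real.exp_nonneg _)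
          exact mul_nonneg (mul_nonneg (Real.exp_nonneg _) hF0) hI0
        · filter_upwards [ae_restrict_mem measurableSet_Ioi] with x hx
          have hx0 : (0:ℝ) < x := hx
          have hF0 : 0 ≤ ∫ u in (0:ℝ)..x, u ^ (H - 3 / 2) * (Real.exp u - 1) :=
            intervalIntegral.integral_nonneg hx0.le fun u hu => aux_phi_nonneg hu.1
          have hkey := key x hx
          have hexp2 : Real.exp (-2 * x) * Real.exp x = Real.exp (-x) := by
            rw [← Real.exp_add]; ring_nf
          calc Real.exp (-2 * x) *
              (∫ u in (0:ℝ)..x, u ^ (H - 3 / 2) * (Real.exp u - 1)) *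
              (∫ v in Set.Ioi (x + K),
                v ^ (H - 3 / 2) * (Real.exp v - 1) * (v - x) ^ (-α - 1) * Real.exp (-(v - x)))
              ≤ Real.exp (-2 * x) *
                (∫ u in (0:ℝ)..x, u ^ (H - 3 / 2) * (Real.exp u - 1)) *
                (Real.exp x * (K ^ (-α + H - 3 / 2) / (1/2 - H))) :=
                mul_le_mul_of_nonneg_left hkey (mul_nonneg (Real.exp_nonneg _) hF0)
            _ = (K ^ (-α + H - 3 / 2) * (1/2 - H)⁻¹) *
                (Real.exp (-x) * ∫ u in (0:ℝ)..x, u ^ (H - 3 / 2) * (Real.exp u - 1)) := by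
                rw [← hexp2]; ring
    _ = ((1/2 - H)⁻¹ * ∫ x in Set.Ioi (0:ℝ),
          Real.exp (-x) * ∫ u in (0:ℝ)..x, u ^ (H - 3 / 2) * (Real.exp u - 1)) *
          K ^ (-α + H - 3 / 2) := by
        rw [MeasureTheory.integral_const_mul]; ring
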